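/- G(γ) tends to 2 as γ tends to +∞. -/

import Mathlib

open Real MeasureTheory

/-- Standard normal density `φ(x) = (2π)^(−1/2) exp(−x²/2)`. -/
noncomputable def stdPDF (x : ℝ) : ℝ := (Real.sqrt (2 * Real.pi))⁻¹ * Real.exp (-x ^ 2 / 2)

/-- Standard normal cumulative distribution function `Φ(x) = ∫_{−∞}^x φ(u) du`. -/
noncomputable def stdCDF (x : ℝ) : ℝ := ∫ u in Set.Iic x, stdPDF u

/-- Mills hazard `h(γ) = φ(γ)/(1 − Φ(γ))`. -/
noncomputable def millsHazard (γ : ℝ) : ℝ := stdPDF γ / (1 - stdCDF γ)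

/-- `G(γ) = (1/(h(γ) − γ))·(1/(h(γ) − γ) − γ)` where `h` is the Mills hazard. -/
noncomputable def G (γ : ℝ) : ℝ :=
  (1 / (millsHazard γ - γ)) * (1 / (millsHazard γ - γ) - γ)

open Filter

section Aux

lemma stdPDF_pos (x : ℝ) : 0 < stdPDF x := by
  apply mul_pos (inv_pos.2 (Real.sqrt_pos.2 (by positivity))) (Real.exp_pos _)

lemma continuous_stdPDF : Continuous stdPDF := by
  apply Continuous.mul continuous_const
  exact (Continuous.div_const (continuous_pow 2).neg 2).rexp

lemma integrable_stdPDF : Integrable stdPDF := by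
  have h : Integrable (fun x : ℝ => Real.exp (-(2⁻¹ : ℝ) * x ^ 2)) := integrable_exp_neg_mul_sq (by norm_num)
  have := h.const_mul (Real.sqrt (2 * Real.pi))⁻¹
  refine this.congr (Filter.Eventually.of_forall fun x => ?_)
  simp only [stdPDF]; ring_nf

lemma integral_stdPDF : ∫ x, stdPDF x = 1 := by
  have h : ∫ x : ℝ, Real.exp (-(2⁻¹:ℝ) * x ^ 2) = Real.sqrt (Real.pi / 2⁻¹) := integral_gaussian 2⁻¹
  have h2 : ∫ x, stdPDF x = (Real.sqrt (2 * Real.pi))⁻¹ * ∫ x : ℝ, Real.exp (-(2⁻¹:ℝ) * x ^ 2) := by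
    rw [← integral_const_mul]
    congr 1; funext x; simp only [stdPDF]; ring_nf
  rw [h2, h]
  rw [show Real.pi / 2⁻¹ = 2 * Real.pi by ring]
  rw [inv_mul_cancel₀ (by positivity)]

noncomputable def tail (γ : ℝ) : ℝ := ∫ u in Set.Ioi γ, stdPDF u

lemma tail_eq (γ : ℝ) : 1 - stdCDF γ = tail γ := by
  have := intervalIntegral.integral_Iic_add_Ioi (b := γ) (f := stdPDF)
    integrable_stdPDF.integrableOn integrable_stdPDF.integrableOn
  rw [integral_stdPDF] at this
  simp only [stdCDF, tail]; linarith

lemma tail_pos (γ : ℝ) : 0 < tail γ := by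
  apply setIntegral_pos_iff_support_of_nonneg_ae ?_ ?_ |>.2
  · simp only [Function.support, ne_eq]
    have : ∀ x, stdPDF x ≠ 0 := fun x => (stdPDF_pos x).ne'
    simp only [this, not_false_iff, Set.setOf_true, Set.univ_inter]
    simp [Real.volume_Ioi]
  · exact Filter.Eventually.of_forall fun x => (stdPDF_pos x).le
  · exact integrable_stdPDF.integrableOn

lemma hasDerivAt_stdCDF (x : ℝ) : HasDerivAt stdCDF (stdPDF x) x := by
  have key : ∀ y : ℝ, stdCDF y = stdCDF 0 + ∫ t in (0:ℝ)..y, stdPDF t := by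
    intro y
    have := intervalIntegral.integral_Iic_sub_Iic (a := (0:ℝ)) (b := y) (f := stdPDF) (μ := volume)
      integrable_stdPDF.integrableOn integrable_stdPDF.integrableOn
    simp only [stdCDF]; linarith
  have h : HasDerivAt (fun y => stdCDF 0 + ∫ t in (0:ℝ)..y, stdPDF t) (stdPDF x) x := by
    apply HasDerivAt.const_add
    exact intervalIntegral.integral_hasDerivAt_right
      (integrable_stdPDF.intervalIntegrable)
      (continuous_stdPDF.stronglyMeasurable.stronglyMeasurableAtFilter)
      continuous_stdPDF.continuousAt
  exact h.congr_of_eventuallyEq (Filter.Eventually.of_forall key)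

lemma hasDerivAt_tail (x : ℝ) : HasDerivAt tail (-stdPDF x) x := by
  have h : HasDerivAt (fun y => 1 - stdCDF y) (-stdPDF x) x := (hasDerivAt_stdCDF x).const_sub 1
  exact h.congr_of_eventuallyEq (Filter.Eventually.of_forall fun y => (tail_eq y).symm)

lemma tendsto_stdCDF : Tendsto stdCDF atTop (nhds 1) := by
  have := MeasureTheory.tendsto_setIntegral_of_monotone (μ := (volume : Measure ℝ))
    (f := stdPDF) (s := fun γ : ℝ => Set.Iic γ) (fun γ => measurableSet_Iic)
    (fun a b hab => Set.Iic_subset_Iic.2 hab) (by rw [Set.iUnion_Iic]; exact integrable_stdPDF.integrableOn)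
  rw [Set.iUnion_Iic, Measure.restrict_univ, integral_stdPDF] at this
  exact this

lemma tendsto_tail : Tendsto tail atTop (nhds 0) := by
  have : Tendsto (fun γ => 1 - stdCDF γ) atTop (nhds (1 - 1)) := tendsto_const_nhds.sub tendsto_stdCDF
  simpa [tail_eq] using this

lemma hasDerivAt_stdPDF (x : ℝ) : HasDerivAt stdPDF (-x * stdPDF x) x := by
  have h1 : HasDerivAt (fun y : ℝ => -y ^ 2 / 2) (-x) x := by
    have := ((hasDerivAt_pow 2 x).neg).div_const 2
    refine this.congr_deriv ?_; ring
  have := (h1.exp).const_mul (Real.sqrt (2 * Real.pi))⁻¹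
  refine this.congr_deriv ?_
  simp only [stdPDF]; ring

noncomputable def pb (γ : ℝ) : ℝ := 1/γ - 1/γ^3 + 3/γ^5
noncomputable def qb (γ : ℝ) : ℝ := 1/γ - 1/γ^3 + 3/γ^5 - 15/γ^7

lemma hasDerivAt_one_div_pow (n : ℕ) (hn : n ≠ 0) {γ : ℝ} (hγ : γ ≠ 0) :
    HasDerivAt (fun x : ℝ => 1 / x ^ n) (-(n : ℝ) / γ ^ (n + 1)) γ := by
  have h := (hasDerivAt_pow n γ).inv (pow_ne_zero n hγ)
  have h2 : HasDerivAt (fun x : ℝ => 1 / x ^ n) (-(↑n * γ ^ (n - 1)) / (γ ^ n) ^ 2) γ := by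
    simpa [one_div, Pi.inv_def] using h
  convert h2 using 1
  obtain ⟨m, rfl⟩ : ∃ m, n = m + 1 := ⟨n - 1, (Nat.succ_pred_eq_of_pos (Nat.pos_of_ne_zero hn)).symm⟩
  simp only [Nat.add_sub_cancel]
  field_simp
  ring

lemma pb_eq : pb = fun x : ℝ => 1/x^1 - 1/x^3 + 3*(1/x^5) := by
  funext x; simp only [pb, pow_one]; ring

lemma qb_eq : qb = fun x : ℝ => (1/x^1 - 1/x^3 + 3*(1/x^5)) - 15*(1/x^7) := by
  funext x; simp only [qb, pow_one]; ring

lemma hasDerivAt_pb {γ : ℝ} (hγ : γ ≠ 0) :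
    HasDerivAt pb (-1/γ^2 + 3/γ^4 - 15/γ^6) γ := by
  have h := ((hasDerivAt_one_div_pow 1 one_ne_zero hγ).sub
    (hasDerivAt_one_div_pow 3 three_ne_zero hγ)).add
    ((hasDerivAt_one_div_pow 5 (by norm_num) hγ).const_mul 3)
  rw [pb_eq]
  refine h.congr_deriv ?_
  norm_num
  ring

lemma hasDerivAt_qb {γ : ℝ} (hγ : γ ≠ 0) :
    HasDerivAt qb (-1/γ^2 + 3/γ^4 - 15/γ^6 + 105/γ^8) γ := by
  have h := (((hasDerivAt_one_div_pow 1 one_ne_zero hγ).sub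
    (hasDerivAt_one_div_pow 3 three_ne_zero hγ)).add
    ((hasDerivAt_one_div_pow 5 (by norm_num) hγ).const_mul 3)).sub
    ((hasDerivAt_one_div_pow 7 (by norm_num) hγ).const_mul 15)
  rw [qb_eq]
  refine h.congr_deriv ?_
  norm_num
  ring

lemma tendsto_one_div_pow (n : ℕ) (hn : n ≠ 0) :
    Tendsto (fun γ : ℝ => 1 / γ ^ n) atTop (nhds 0) := by
  have := tendsto_inv_atTop_zero.comp (tendsto_pow_atTop (α := ℝ) hn)
  simpa [Function.comp_def, one_div] using this

lemma tendsto_stdPDF_zero : Tendsto stdPDF atTop (nhds 0) := by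
  have h1 : Tendsto (fun γ : ℝ => -γ ^ 2 / 2) atTop atBot := by
    apply Filter.Tendsto.atBot_div_const (by norm_num : (0:ℝ) < 2)
    exact tendsto_neg_atBot_iff.2 (tendsto_pow_atTop two_ne_zero)
  have h2 := (Real.tendsto_exp_atBot.comp h1).const_mul (Real.sqrt (2 * Real.pi))⁻¹
  rw [mul_zero] at h2
  exact h2

lemma tendsto_pb : Tendsto pb atTop (nhds 0) := by
  rw [pb_eq, show (0:ℝ) = 0 - 0 + 3 * 0 by norm_num]
  exact ((tendsto_one_div_pow 1 one_ne_zero).sub (tendsto_one_div_pow 3 three_ne_zero)).add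
    ((tendsto_one_div_pow 5 (by norm_num)).const_mul 3)

lemma tendsto_qb : Tendsto qb atTop (nhds 0) := by
  rw [qb_eq, show (0:ℝ) = (0 - 0 + 3 * 0) - 15 * 0 by norm_num]
  exact (((tendsto_one_div_pow 1 one_ne_zero).sub (tendsto_one_div_pow 3 three_ne_zero)).add
    ((tendsto_one_div_pow 5 (by norm_num)).const_mul 3)).sub
    ((tendsto_one_div_pow 7 (by norm_num)).const_mul 15)

lemma hasDerivAt_u {x : ℝ} (hx : 0 < x) :
    HasDerivAt (fun y => tail y - stdPDF y * pb y) (stdPDF x * (15 / x ^ 6)) x := by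
  have h := (hasDerivAt_tail x).sub ((hasDerivAt_stdPDF x).mul (hasDerivAt_pb hx.ne'))
  refine h.congr_deriv ?_
  simp only [pb]
  field_simp
  ring

lemma hasDerivAt_v {x : ℝ} (hx : 0 < x) :
    HasDerivAt (fun y => tail y - stdPDF y * qb y) (-(stdPDF x * (105 / x ^ 8))) x := by
  have h := (hasDerivAt_tail x).sub ((hasDerivAt_stdPDF x).mul (hasDerivAt_qb hx.ne'))
  refine h.congr_deriv ?_
  simp only [qb]
  field_simp
  ring

lemma tail_le_pb {γ : ℝ} (hγ : 1 ≤ γ) : tail γ ≤ stdPDF γ * pb γ := by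
  set u : ℝ → ℝ := fun y => tail y - stdPDF y * pb y with hu_def
  have hmono : MonotoneOn u (Set.Ici 1) := by
    refine (strictMonoOn_of_deriv_pos (convex_Ici 1) ?_ ?_).monotoneOn
    · exact fun x hx => ((hasDerivAt_u (lt_of_lt_of_le one_pos hx)).continuousAt).continuousWithinAt
    · intro x hx
      rw [interior_Ici] at hx
      rw [(hasDerivAt_u (lt_trans one_pos hx)).deriv]
      have h1 := stdPDF_pos x
      have hx0 : (0:ℝ) < x := lt_trans one_pos hx
      positivity
  have hlim : Tendsto u atTop (nhds 0) := by
    have := tendsto_tail.sub (tendsto_stdPDF_zero.mul tendsto_pb)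
    simpa using this
  have h0 : u γ ≤ 0 := by
    refine ge_of_tendsto hlim ?_
    filter_upwards [eventually_ge_atTop γ] with x hx
    exact hmono hγ (le_trans hγ hx) hx
  simp only [hu_def] at h0
  linarith
lemma qb_le_tail {γ : ℝ} (hγ : 1 ≤ γ) : stdPDF γ * qb γ ≤ tail γ := by
  set v : ℝ → ℝ := fun y => tail y - stdPDF y * qb y with hv_def
  have hmono : AntitoneOn v (Set.Ici 1) := by
    refine (strictAntiOn_of_deriv_neg (convex_Ici 1) ?_ ?_).antitoneOn
    · exact fun x hx => ((hasDerivAt_v (lt_of_lt_of_le one_pos hx)).continuousAt).continuousWithinAt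
    · intro x hx
      rw [interior_Ici] at hx
      rw [(hasDerivAt_v (lt_trans one_pos hx)).deriv]
      have h1 := stdPDF_pos x
      have hx0 : (0:ℝ) < x := lt_trans one_pos hx
      have : 0 < stdPDF x * (105 / x ^ 8) := by positivity
      linarith
  have hlim : Tendsto v atTop (nhds 0) := by
    have := tendsto_tail.sub (tendsto_stdPDF_zero.mul tendsto_qb)
    simpa using this
  have h0 : 0 ≤ v γ := by
    refine le_of_tendsto hlim ?_
    filter_upwards [eventually_ge_atTop γ] with x hx
    exact hmono hγ (le_trans hγ hx) hx
  simp only [hv_def] at h0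
  linarith

lemma t_gp : Tendsto (fun γ : ℝ => γ * pb γ) atTop (nhds 1) := by
  have h : Tendsto (fun γ : ℝ => 1 - 1/γ^2 + 3 * (1/γ^4)) atTop (nhds (1 - 0 + 3 * 0)) :=
    (tendsto_const_nhds.sub (tendsto_one_div_pow 2 two_ne_zero)).add
      ((tendsto_one_div_pow 4 (by norm_num)).const_mul 3)
  rw [show (1:ℝ) - 0 + 3 * 0 = 1 by norm_num] at h
  refine h.congr' ?_
  filter_upwards [eventually_ge_atTop (1:ℝ)] with γ hγ
  have hγ0 : γ ≠ 0 := by positivity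
  simp only [pb]; field_simp

lemma t_gq : Tendsto (fun γ : ℝ => γ * qb γ) atTop (nhds 1) := by
  have h : Tendsto (fun γ : ℝ => 1 - 1/γ^2 + 3 * (1/γ^4) - 15 * (1/γ^6)) atTop
      (nhds (1 - 0 + 3 * 0 - 15 * 0)) :=
    ((tendsto_const_nhds.sub (tendsto_one_div_pow 2 two_ne_zero)).add
      ((tendsto_one_div_pow 4 (by norm_num)).const_mul 3)).sub
      ((tendsto_one_div_pow 6 (by norm_num)).const_mul 15)
  rw [show (1:ℝ) - 0 + 3 * 0 - 15 * 0 = 1 by norm_num] at h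
  refine h.congr' ?_
  filter_upwards [eventually_ge_atTop (1:ℝ)] with γ hγ
  have hγ0 : γ ≠ 0 := by positivity
  simp only [qb]; field_simp

lemma t_Bp : Tendsto (fun γ : ℝ => γ^2 * (1 - γ * pb γ)) atTop (nhds 1) := by
  have h : Tendsto (fun γ : ℝ => 1 - 3 * (1/γ^2)) atTop (nhds (1 - 3 * 0)) :=
    tendsto_const_nhds.sub ((tendsto_one_div_pow 2 two_ne_zero).const_mul 3)
  rw [show (1:ℝ) - 3 * 0 = 1 by norm_num] at h
  refine h.congr' ?_
  filter_upwards [eventually_ge_atTop (1:ℝ)] with γ hγ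
  have hγ0 : γ ≠ 0 := by positivity
  simp only [pb]; field_simp; ring

lemma t_Bq : Tendsto (fun γ : ℝ => γ^2 * (1 - γ * qb γ)) atTop (nhds 1) := by
  have h : Tendsto (fun γ : ℝ => 1 - 3 * (1/γ^2) + 15 * (1/γ^4)) atTop (nhds (1 - 3 * 0 + 15 * 0)) :=
    (tendsto_const_nhds.sub ((tendsto_one_div_pow 2 two_ne_zero).const_mul 3)).add
      ((tendsto_one_div_pow 4 (by norm_num)).const_mul 15)
  rw [show (1:ℝ) - 3 * 0 + 15 * 0 = 1 by norm_num] at h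
  refine h.congr' ?_
  filter_upwards [eventually_ge_atTop (1:ℝ)] with γ hγ
  have hγ0 : γ ≠ 0 := by positivity
  simp only [qb]; field_simp; ring

lemma t_Cp : Tendsto (fun γ : ℝ => γ^3 * ((1 + γ^2) * pb γ - γ)) atTop (nhds 2) := by
  have h : Tendsto (fun γ : ℝ => 2 + 3 * (1/γ^2)) atTop (nhds (2 + 3 * 0)) :=
    tendsto_const_nhds.add ((tendsto_one_div_pow 2 two_ne_zero).const_mul 3)
  rw [show (2:ℝ) + 3 * 0 = 2 by norm_num] at h
  refine h.congr' ?_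
  filter_upwards [eventually_ge_atTop (1:ℝ)] with γ hγ
  have hγ0 : γ ≠ 0 := by positivity
  simp only [pb]; field_simp; ring

lemma t_Cq : Tendsto (fun γ : ℝ => γ^3 * ((1 + γ^2) * qb γ - γ)) atTop (nhds 2) := by
  have h : Tendsto (fun γ : ℝ => 2 + 3 * (1/γ^2) - 15 * (1/γ^2) - 15 * (1/γ^4)) atTop
      (nhds (2 + 3 * 0 - 15 * 0 - 15 * 0)) :=
    ((tendsto_const_nhds.add ((tendsto_one_div_pow 2 two_ne_zero).const_mul 3)).sub
      ((tendsto_one_div_pow 2 two_ne_zero).const_mul 15)).sub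
      ((tendsto_one_div_pow 4 (by norm_num)).const_mul 15)
  rw [show (2:ℝ) + 3 * 0 - 15 * 0 - 15 * 0 = 2 by norm_num] at h
  refine h.congr' ?_
  filter_upwards [eventually_ge_atTop (1:ℝ)] with γ hγ
  have hγ0 : γ ≠ 0 := by positivity
  simp only [qb]; field_simp; ring

-- ratio bounds
lemma R_le {γ : ℝ} (hγ : 1 ≤ γ) : tail γ / stdPDF γ ≤ pb γ :=
  (div_le_iff₀ (stdPDF_pos γ)).2 (by have := tail_le_pb hγ; linarith [mul_comm (stdPDF γ) (pb γ)])

lemma le_R {γ : ℝ} (hγ : 1 ≤ γ) : qb γ ≤ tail γ / stdPDF γ :=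
  (le_div_iff₀ (stdPDF_pos γ)).2 (by have := qb_le_tail hγ; linarith [mul_comm (qb γ) (stdPDF γ)])

lemma hA : Tendsto (fun γ : ℝ => γ * (tail γ / stdPDF γ)) atTop (nhds 1) := by
  refine tendsto_of_tendsto_of_tendsto_of_le_of_le' t_gq t_gp ?_ ?_ <;>
    (filter_upwards [eventually_ge_atTop (1:ℝ)] with γ hγ)
  · exact mul_le_mul_of_nonneg_left (le_R hγ) (by linarith)
  · exact mul_le_mul_of_nonneg_left (R_le hγ) (by linarith)

lemma hB : Tendsto (fun γ : ℝ => γ^2 * (1 - γ * (tail γ / stdPDF γ))) atTop (nhds 1) := by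
  refine tendsto_of_tendsto_of_tendsto_of_le_of_le' t_Bp t_Bq ?_ ?_ <;>
    (filter_upwards [eventually_ge_atTop (1:ℝ)] with γ hγ)
  · have h := mul_le_mul_of_nonneg_left (R_le hγ) (by linarith : (0:ℝ) ≤ γ)
    nlinarith [sq_nonneg γ]
  · have h := mul_le_mul_of_nonneg_left (le_R hγ) (by linarith : (0:ℝ) ≤ γ)
    nlinarith [sq_nonneg γ]

lemma hC : Tendsto (fun γ : ℝ => γ^3 * ((1 + γ^2) * (tail γ / stdPDF γ) - γ)) atTop (nhds 2) := by
  refine tendsto_of_tendsto_of_tendsto_of_le_of_le' t_Cq t_Cp ?_ ?_ <;>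
    (filter_upwards [eventually_ge_atTop (1:ℝ)] with γ hγ)
  · have h := mul_le_mul_of_nonneg_left (le_R hγ) (by positivity : (0:ℝ) ≤ 1 + γ^2)
    have h3 : (0:ℝ) ≤ γ^3 := by positivity
    nlinarith
  · have h := mul_le_mul_of_nonneg_left (R_le hγ) (by positivity : (0:ℝ) ≤ 1 + γ^2)
    have h3 : (0:ℝ) ≤ γ^3 := by positivity
    nlinarith


end Aux

/-- `G(γ)` tends to `2` as `γ → +∞`. -/
theorem G_tendsto_two_atTop : Filter.Tendsto G Filter.atTop (nhds 2) := by
  have hmain : Tendsto (fun γ : ℝ =>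
      (γ * (tail γ / stdPDF γ)) * (γ^3 * ((1 + γ^2) * (tail γ / stdPDF γ) - γ)) /
        (γ^2 * (1 - γ * (tail γ / stdPDF γ)))^2) atTop (nhds 2) := by
    have := (hA.mul hC).div (hB.pow 2) (by norm_num)
    simpa [Pi.div_def] using this
  refine hmain.congr' ?_
  filter_upwards [eventually_ge_atTop (2:ℝ)] with γ hγ
  have hγ1 : (1:ℝ) ≤ γ := by linarith
  have hγ0 : (0:ℝ) < γ := by linarith
  have hb := stdPDF_pos γ
  have ha := tail_pos γ
  -- key positivity : stdPDF γ - γ * tail γ > 0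
  have hpb : 1 - γ * pb γ = (γ^2 - 3)/γ^4 := by
    simp only [pb]; field_simp; ring
  have hpos1 : 0 < 1 - γ * pb γ := by
    rw [hpb]; apply div_pos (by nlinarith) (by positivity)
  have hkey : 0 < stdPDF γ - γ * tail γ := by
    have h1 := tail_le_pb hγ1
    have h2 : γ * tail γ ≤ γ * (stdPDF γ * pb γ) := mul_le_mul_of_nonneg_left h1 hγ0.le
    nlinarith
  have hkey' : stdPDF γ - γ * tail γ ≠ 0 := hkey.ne'
  have hkey2 : -(γ * tail γ) + stdPDF γ ≠ 0 := by rw [neg_add_eq_sub]; exact hkey.ne'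
  have hRne : 1 - γ * (tail γ / stdPDF γ) ≠ 0 := by
    have h : 1 - γ * (tail γ / stdPDF γ) = (stdPDF γ - γ * tail γ) / stdPDF γ := by
      field_simp
    rw [h]; positivity
  have e1 : stdPDF γ / tail γ - γ = (stdPDF γ - γ * tail γ) / tail γ := by
    field_simp
  simp only [G, millsHazard, tail_eq]
  rw [e1, one_div_div]
  field_simp
  ring
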